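/- Suppose B is G-regular and V is a finite-dimensional ℚ_p-vector space with a ℚ_p-linear G-action. Then the natural B-linear map D_B(V) ⊗_E B → V ⊗_{ℚ_p} B sending d ⊗ b to b·d is injective; consequently dim_E D_B(V) ≤ dim_{ℚ_p} V. -/

import Mathlib

open scoped TensorProduct

/-- The subring `E = B^G` of `G`-invariant elements of `B`. -/
def invariantSubring (G : Type*) [Group G] (B : Type*) [CommRing B]
    [MulSemiringAction G B] : Subring B where
  carrier := {b | ∀ g : G, g • b = b}
  zero_mem' g := smul_zero g
  one_mem' g := smul_one g
  add_mem' := fun ha hb g => by rw [smul_add, ha g, hb g]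
  mul_mem' := fun ha hb g => by rw [smul_mul', ha g, hb g]
  neg_mem' := fun ha g => by rw [smul_neg, ha g]

section

variable (p : ℕ) [Fact p.Prime]
variable (G : Type*) [Group G]
variable (B : Type*) [CommRing B] [Algebra ℚ_[p] B]
variable [MulSemiringAction G B] [SMulCommClass G ℚ_[p] B]
variable (V : Type*) [AddCommGroup V] [Module ℚ_[p] V]
variable [DistribMulAction G V] [SMulCommClass G ℚ_[p] V]

/-- The diagonal (semilinear) action of `g ∈ G` on `B ⊗[ℚ_p] V`,
`g • (b ⊗ v) = (g • b) ⊗ (g • v)`. -/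
noncomputable def diagAct (g : G) : B ⊗[ℚ_[p]] V →ₗ[ℚ_[p]] B ⊗[ℚ_[p]] V :=
  TensorProduct.map (DistribMulAction.toLinearMap ℚ_[p] B g)
    (DistribMulAction.toLinearMap ℚ_[p] V g)

lemma diagAct_smul (g : G) (b : B) (x : B ⊗[ℚ_[p]] V) :
    diagAct p G B V g (b • x) = (g • b) • diagAct p G B V g x := by
  induction x with
  | zero => simp
  | tmul b' v =>
      simp only [TensorProduct.smul_tmul', smul_eq_mul, diagAct, TensorProduct.map_tmul,
        DistribSMul.toLinearMap_apply, smul_mul']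
      exact congrArg (fun y : B => y ⊗ₜ[ℚ_[p]] (DistribMulAction.toLinearMap ℚ_[p] V g v))
        (smul_mul' g b b')
  | add x y hx hy => rw [smul_add, map_add, hx, hy, map_add, smul_add]

/-- `D_B(V) = (V ⊗[ℚ_p] B)^G` as a module over `E = B^G`. -/
noncomputable def invariantsD : Submodule (invariantSubring G B) (B ⊗[ℚ_[p]] V) where
  carrier := {x | ∀ g : G, diagAct p G B V g x = x}
  zero_mem' g := map_zero _
  add_mem' := fun hx hy g => by rw [map_add, hx g, hy g]
  smul_mem' := fun e x hx g => by
    have h : diagAct p G B V g ((e : B) • x) = (g • (e : B)) • diagAct p G B V g x :=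
      diagAct_smul p G B V g (e : B) x
    have he : g • (e : B) = (e : B) := e.2 g
    show diagAct p G B V g ((e : B) • x) = (e : B) • x
    rw [h, he, hx g]

/-- The natural map `D_B(V) ⊗[E] B → V ⊗[ℚ_p] B`, `d ⊗ b ↦ b • d`. -/
noncomputable def comparisonMap :
    (invariantsD p G B V) ⊗[invariantSubring G B] B →ₗ[invariantSubring G B]
      B ⊗[ℚ_[p]] V :=
  TensorProduct.lift
    { toFun := fun d =>
        { toFun := fun b => b • (d : B ⊗[ℚ_[p]] V)
          map_add' := fun b₁ b₂ => add_smul b₁ b₂ _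
          map_smul' := fun e b => by
            show ((e : B) * b) • (d : B ⊗[ℚ_[p]] V) = (e : B) • (b • (d : B ⊗[ℚ_[p]] V))
            rw [mul_smul] }
      map_add' := fun d₁ d₂ => by
        ext b
        simp
      map_smul' := fun e d => by
        ext b
        show b • ((e : B) • (d : B ⊗[ℚ_[p]] V)) = (e : B) • (b • (d : B ⊗[ℚ_[p]] V))
        rw [smul_comm] }

end


section Aux

variable (p : ℕ) [Fact p.Prime]
variable (G : Type*) [Group G]
variable (B : Type*) [CommRing B] [IsDomain B] [Algebra ℚ_[p] B]
variable [MulSemiringAction G B] [SMulCommClass G ℚ_[p] B]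
variable [MulSemiringAction G (FractionRing B)]
variable (V : Type*) [AddCommGroup V] [Module ℚ_[p] V] [FiniteDimensional ℚ_[p] V]
variable [DistribMulAction G V] [SMulCommClass G ℚ_[p] V]

set_option synthInstance.maxHeartbeats 1000000 in
lemma aux_coe_smul (k : invariantSubring G B) (x : invariantsD p G B V) :
    ((k • x : invariantsD p G B V) : B ⊗[ℚ_[p]] V) = (k : B) • (x : B ⊗[ℚ_[p]] V) := rfl

set_option synthInstance.maxHeartbeats 1000000 in
lemma aux_smul_smul (k : invariantSubring G B) (b : B) (x : B ⊗[ℚ_[p]] V) :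
    b • ((k : B) • x) = (k • b) • x := by
  show b • ((k : B) • x) = ((k : B) * b) • x
  rw [smul_smul, mul_comm]

set_option synthInstance.maxHeartbeats 1000000 in
set_option maxHeartbeats 1000000 in
/-- Invariant elements of `B` viewed inside `B ⊗ V` are linearly independent over `B`
whenever they are linearly independent over `E = B^G`. -/
lemma aux_li
    (hext : ∀ (g : G) (b : B),
      g • algebraMap B (FractionRing B) b = algebraMap B (FractionRing B) (g • b))
    (hreg₁ : ∀ x : FractionRing B, (∀ g : G, g • x = x) →
      x ∈ (algebraMap B (FractionRing B)).range)
    {ι : Type*} (d : ι → invariantsD p G B V)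
    (hd : LinearIndependent (invariantSubring G B) d) :
    LinearIndependent B (fun i => ((d i : B ⊗[ℚ_[p]] V))) := by
  classical
  haveI : Module.IsTorsionFree B (B ⊗[ℚ_[p]] V) :=
    ((Module.finBasis ℚ_[p] V).baseChange B).isTorsionFree
  set K := FractionRing B
  set φ := algebraMap B K with hφdef
  have hinjφ : Function.Injective φ := IsFractionRing.injective B K
  rw [linearIndependent_iff']
  suffices H : ∀ n (s : Finset ι) (c : ι → B),
      s.card = n → (∑ i ∈ s, c i • (d i : B ⊗[ℚ_[p]] V)) = 0 → ∀ i ∈ s, c i = 0 by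
    intro s c h; exact H s.card s c rfl h
  intro n
  induction n using Nat.strong_induction_on with
  | _ n IH =>
  intro s c hcard hrel
  by_cases hzero : ∃ j ∈ s, c j = 0
  · obtain ⟨j, hj, hcj⟩ := hzero
    have hterm : c j • (d j : B ⊗[ℚ_[p]] V) = 0 := by rw [hcj, zero_smul]
    have hrel' : ∑ i ∈ s.erase j, c i • (d i : B ⊗[ℚ_[p]] V) = 0 :=
      (Finset.sum_erase s hterm).trans hrel
    have h' := IH (s.erase j).card (hcard ▸ Finset.card_erase_lt_of_mem hj)
      (s.erase j) c rfl hrel'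
    intro i hi
    by_cases hij : i = j
    · rw [hij]; exact hcj
    · exact h' i (Finset.mem_erase.mpr ⟨hij, hi⟩)
  · push_neg at hzero
    rcases Finset.eq_empty_or_nonempty s with hs | ⟨i₀, hi₀⟩
    · intro i hi; rw [hs] at hi; exact absurd hi (Finset.notMem_empty i)
    exfalso
    have hci₀ : c i₀ ≠ 0 := hzero i₀ hi₀
    -- twisted relations
    have hrelg : ∀ g : G, ∑ i ∈ s, (g • c i) • (d i : B ⊗[ℚ_[p]] V) = 0 := by
      intro g
      have hterm : ∀ i ∈ s, (g • c i) • (d i : B ⊗[ℚ_[p]] V)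
          = diagAct p G B V g (c i • (d i : B ⊗[ℚ_[p]] V)) := fun i _ => by
        rw [diagAct_smul, (d i).2 g]
      rw [Finset.sum_congr rfl hterm, ← map_sum, hrel, map_zero]
    -- cross relations
    have hcross : ∀ (g : G), ∀ i ∈ s, (g • c i₀) * c i = c i₀ * (g • c i) := by
      intro g
      set c' : ι → B := fun i => (g • c i₀) * c i - c i₀ * (g • c i) with hc'
      have hrel' : ∑ i ∈ s, c' i • (d i : B ⊗[ℚ_[p]] V) = 0 := by
        have sub_smul' : ∀ (a b : B) (x : B ⊗[ℚ_[p]] V), (a - b) • x = a • x - b • x :=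
          fun a b x => sub_smul a b x
        simp only [hc', sub_smul', mul_smul]
        rw [Finset.sum_sub_distrib, ← Finset.smul_sum, ← Finset.smul_sum, hrel, hrelg g,
          smul_zero, smul_zero, sub_zero]
      have hterm : c' i₀ • (d i₀ : B ⊗[ℚ_[p]] V) = 0 := by
        have : c' i₀ = 0 := by simp only [hc']; ring
        rw [this, zero_smul]
      have hrel'' : ∑ i ∈ s.erase i₀, c' i • (d i : B ⊗[ℚ_[p]] V) = 0 :=
        (Finset.sum_erase s hterm).trans hrel'
      have hall := IH (s.erase i₀).card (hcard ▸ Finset.card_erase_lt_of_mem hi₀)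
        (s.erase i₀) c' rfl hrel''
      intro i hi
      by_cases hii : i = i₀
      · subst hii; exact mul_comm _ _
      · have h0 := hall i (Finset.mem_erase.mpr ⟨hii, hi⟩)
        exact sub_eq_zero.mp h0
    have hφci₀ : φ (c i₀) ≠ 0 := fun h => hci₀ (hinjφ (by rw [h, map_zero]))
    have hsmul_ne : ∀ g : G, φ (g • c i₀) ≠ 0 := by
      intro g h
      have h1 : g • c i₀ = 0 := hinjφ (by rw [h, map_zero])
      apply hci₀
      have := congrArg (fun x => g⁻¹ • x) h1
      simpa [inv_smul_smul] using this
    -- invariant quotients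
    have hkey : ∀ i : ι, ∃ e : B, (∀ g : G, g • e = e) ∧ (i ∈ s → e * c i₀ = c i) := by
      intro i
      by_cases hi : i ∈ s
      · set x : K := φ (c i) / φ (c i₀) with hx
        have hxinv : ∀ g : G, g • x = x := by
          intro g
          have h1 : g • x = φ (g • c i) / φ (g • c i₀) := by
            have h2 := map_div₀ (MulSemiringAction.toRingHom G K g) (φ (c i)) (φ (c i₀))
            have h3 : ∀ y : K, MulSemiringAction.toRingHom G K g y = g • y := fun y => rfl
            rw [h3, h3, h3] at h2
            rw [hx, h2, hext, hext]
          rw [h1, hx, div_eq_div_iff (hsmul_ne g) hφci₀]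
          rw [← map_mul, ← map_mul]
          congr 1
          linear_combination - hcross g i hi
        obtain ⟨e, he⟩ := hreg₁ x hxinv
        refine ⟨e, ?_, fun _ => ?_⟩
        · intro g
          apply hinjφ
          rw [← hext, he, hxinv g]
        · apply hinjφ
          rw [map_mul, he, hx, div_mul_cancel₀ _ hφci₀]
      · exact ⟨0, fun g => smul_zero g, fun h => absurd h hi⟩
    choose e he1 he2 using hkey
    -- relation over E
    have h0 : ∑ i ∈ s, e i • (d i : B ⊗[ℚ_[p]] V) = 0 := by
      have h1 : c i₀ • ∑ i ∈ s, e i • (d i : B ⊗[ℚ_[p]] V) = 0 := by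
        rw [Finset.smul_sum, ← hrel]
        refine Finset.sum_congr rfl fun i hi => ?_
        rw [smul_smul, mul_comm, he2 i hi]
      rcases smul_eq_zero.mp h1 with h | h
      · exact absurd h hci₀
      · exact h
    have hrelE : ∑ i ∈ s, (⟨e i, he1 i⟩ : invariantSubring G B) • d i = 0 := by
      have hcoe : ((∑ i ∈ s, (⟨e i, he1 i⟩ : invariantSubring G B) • d i :
          invariantsD p G B V) : B ⊗[ℚ_[p]] V) = ∑ i ∈ s, e i • (d i : B ⊗[ℚ_[p]] V) := by
        rw [show ((∑ i ∈ s, (⟨e i, he1 i⟩ : invariantSubring G B) • d i :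
            invariantsD p G B V) : B ⊗[ℚ_[p]] V)
          = (invariantsD p G B V).subtype (∑ i ∈ s,
              (⟨e i, he1 i⟩ : invariantSubring G B) • d i) from rfl, map_sum]
        exact Finset.sum_congr rfl fun i _ =>
          aux_coe_smul p G B V ⟨e i, he1 i⟩ (d i)
      exact Subtype.ext (hcoe.trans h0)
    have hE := linearIndependent_iff'ₛ.mp hd s (fun i => ⟨e i, he1 i⟩) 0 (by rw [hrelE]; simp) i₀ hi₀
    have he0 : e i₀ = 0 := congrArg Subtype.val hE
    have : e i₀ * c i₀ = c i₀ := he2 i₀ hi₀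
    rw [he0, zero_mul] at this
    exact hci₀ this.symm

/-- `E = B^G` is a field when `B` is `G`-regular. -/
lemma aux_isField
    (hext : ∀ (g : G) (b : B),
      g • algebraMap B (FractionRing B) b = algebraMap B (FractionRing B) (g • b))
    (hreg₁ : ∀ x : FractionRing B, (∀ g : G, g • x = x) →
      x ∈ (algebraMap B (FractionRing B)).range) :
    IsField (invariantSubring G B) := by
  set K := FractionRing B
  set φ := algebraMap B K with hφdef
  have hinjφ : Function.Injective φ := IsFractionRing.injective B K
  refine ⟨⟨0, 1, ?_⟩, mul_comm, ?_⟩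
  · intro h
    exact zero_ne_one (congrArg Subtype.val h)
  · intro a ha
    have ha' : (a : B) ≠ 0 := fun h => ha (Subtype.ext h)
    have hφa : φ (a : B) ≠ 0 := fun h => ha' (hinjφ (by rw [h, map_zero]))
    have hxinv : ∀ g : G, g • (φ (a : B))⁻¹ = (φ (a : B))⁻¹ := by
      intro g
      have h2 := map_inv₀ (MulSemiringAction.toRingHom G K g) (φ (a : B))
      have h3 : ∀ y : K, MulSemiringAction.toRingHom G K g y = g • y := fun y => rfl
      rw [h3, h3] at h2
      rw [h2, hext, a.2 g]
    obtain ⟨b, hb⟩ := hreg₁ _ hxinv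
    have hbinv : ∀ g : G, g • b = b := fun g => hinjφ (by rw [← hext, hb, hxinv g])
    refine ⟨⟨b, hbinv⟩, ?_⟩
    apply Subtype.ext
    show (a : B) * b = 1
    apply hinjφ
    rw [map_mul, hb, map_one, mul_inv_cancel₀ hφa]

end Aux

set_option synthInstance.maxHeartbeats 1000000 in
set_option maxHeartbeats 1000000 in
/-- If `B` is `G`-regular, then for any finite-dimensional `p`-adic representation `V` of `G`
the natural map `D_B(V) ⊗[E] B → V ⊗[ℚ_p] B`, `d ⊗ b ↦ b • d`, is injective; consequently
`dim_E D_B(V) ≤ dim_{ℚ_p} V`. -/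
theorem comparisonMap_injective
    (p : ℕ) [Fact p.Prime]
    (G : Type*) [Group G]
    (B : Type*) [CommRing B] [IsDomain B] [Algebra ℚ_[p] B]
    [MulSemiringAction G B] [SMulCommClass G ℚ_[p] B]
    [MulSemiringAction G (FractionRing B)]
    (hext : ∀ (g : G) (b : B),
      g • algebraMap B (FractionRing B) b = algebraMap B (FractionRing B) (g • b))
    (hreg₁ : ∀ x : FractionRing B, (∀ g : G, g • x = x) →
      x ∈ (algebraMap B (FractionRing B)).range)
    (hreg₂ : ∀ b : B, b ≠ 0 →
      (∀ g : G, ∃ c : ℚ_[p], g • b = c • b) → IsUnit b)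
    (V : Type*) [AddCommGroup V] [Module ℚ_[p] V] [FiniteDimensional ℚ_[p] V]
    [DistribMulAction G V] [SMulCommClass G ℚ_[p] V] :
    Function.Injective (comparisonMap p G B V) ∧
      Module.finrank (invariantSubring G B) (invariantsD p G B V) ≤
        Module.finrank ℚ_[p] V := by
  classical
  letI : Field (invariantSubring G B) :=
    { (inferInstance : CommRing (invariantSubring G B)),
      (aux_isField G B hext hreg₁).toField with }
  let E := invariantSubring G B
  let D := invariantsD p G B V
  let bV := Module.finBasis ℚ_[p] V
  let bas := Module.Basis.ofVectorSpace E D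
  have hli : LinearIndependent B
      (fun i : Module.Basis.ofVectorSpaceIndex E D => ((bas i : D) : B ⊗[ℚ_[p]] V)) :=
    aux_li p G B V hext hreg₁ _ bas.linearIndependent
  have hinj : Function.Injective (comparisonMap p G B V) := by
    let ψ : (D ⊗[E] B) ≃ₗ[E] (Module.Basis.ofVectorSpaceIndex E D →₀ B) :=
      (TensorProduct.congr bas.repr (LinearEquiv.refl E B)).trans
        (TensorProduct.finsuppScalarLeft E B _)
    have hcomp : ∀ x, comparisonMap p G B V x =
        Finsupp.linearCombination B
          (fun i : Module.Basis.ofVectorSpaceIndex E D => ((bas i : D) : B ⊗[ℚ_[p]] V)) (ψ x) := by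
      intro x
      induction x with
      | zero => simp
      | add x y hx hy => rw [map_add, map_add, map_add, hx, hy]
      | tmul dd b =>
        show b • (dd : B ⊗[ℚ_[p]] V) = _
        have hψ : ψ (dd ⊗ₜ[E] b) = (bas.repr dd).sum fun i k => Finsupp.single i (k • b) := by
          simp [ψ, TensorProduct.finsuppScalarLeft_apply_tmul]
        rw [hψ, map_finsuppSum]
        simp only [Finsupp.linearCombination_single]
        have hdd : (dd : B ⊗[ℚ_[p]] V)
            = (bas.repr dd).sum fun i k => k • ((bas i : D) : B ⊗[ℚ_[p]] V) := by
          conv_lhs => rw [← bas.linearCombination_repr dd]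
          rw [Finsupp.linearCombination_apply]
          rw [show (((bas.repr dd).sum fun i k => k • bas i : D) : B ⊗[ℚ_[p]] V)
            = (bas.repr dd).sum fun i k => ((k • bas i : D) : B ⊗[ℚ_[p]] V) from
              map_finsuppSum D.subtype _ _]
          rfl
        rw [hdd, Finsupp.smul_sum]
        exact Finsupp.sum_congr fun i _ => aux_smul_smul p G B V _ b _
    intro x y hxy
    apply ψ.injective
    exact hli (by rw [← hcomp, ← hcomp, hxy])
  have hcard : (Cardinal.mk (Module.Basis.ofVectorSpaceIndex E D))
      ≤ (Module.finrank ℚ_[p] V : Cardinal) := by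
    haveI : Module.Finite B (B ⊗[ℚ_[p]] V) := Module.Finite.of_basis (bV.baseChange B)
    haveI : Module.Free B (B ⊗[ℚ_[p]] V) := Module.Free.of_basis (bV.baseChange B)
    have h1 := hli.cardinal_le_rank
    rw [← Module.finrank_eq_rank] at h1
    have h2 : Module.finrank B (B ⊗[ℚ_[p]] V) = Module.finrank ℚ_[p] V := by
      rw [Module.finrank_eq_card_basis (bV.baseChange B), Fintype.card_fin]
    rwa [h2] at h1
  haveI : Fintype (Module.Basis.ofVectorSpaceIndex E D) :=
    (Cardinal.lt_aleph0_iff_fintype.mp (hcard.trans_lt (Cardinal.nat_lt_aleph0 _))).some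
  refine ⟨hinj, ?_⟩
  rw [Module.finrank_eq_card_basis bas]
  have := hcard
  rw [Cardinal.mk_fintype] at this
  exact_mod_cast this
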